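/- Let R ≡ 0, M = B/(2ρ), and suppose D_1 = D_2 = 0. With constant step size γ_k = γ ≤ 1/(4(A+MC)), the iterates x_{k+1} = x_k − γ g_k satisfy, for every k ≥ 1, E[f(x̄_k) − f(x*)] ≤ ( ‖x_0 − x*‖² + 2 M γ² σ_0² ) / ( γ k ), where x̄_k = (1/k) Σ_{j=0}^{k−1} x_j. -/

import Mathlib

open MeasureTheory Finset
open scoped RealInnerProductSpace

section aux
open Filter

private lemma stmt11_seq (γ A B C ρ : ℝ) (hγ : 0 < γ) (hB : 0 ≤ B) (hC : 0 ≤ C)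
    (hρ : 0 < ρ) (hρ1 : ρ ≤ 1) (hstep : 2*γ*(A*ρ + B*C) ≤ ρ)
    (a e s G : ℕ → ℝ)
    (ha0 : ∀ n, 0 ≤ a n) (he0 : ∀ n, 0 ≤ e n)
    (h1 : ∀ n, a (n+1) ≤ a n - 2*γ*e n + γ^2 * G n)
    (h2 : ∀ n, s (n+1) ≤ (1-ρ)*s n + 2*C*e n)
    (h3 : ∀ n, G n ≤ 2*A*e n + B*s n)
    (k : ℕ) : γ * ∑ j ∈ range k, e j ≤ a 0 + γ^2*B/ρ * s 0 := by
  have hρ1' : 0 ≤ 1 - ρ := by linarith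
  have hρ1'' : 1 - ρ < 1 := by linarith
  set Gs : ℕ → ℝ := fun n => Nat.rec 0 (fun m G => (1-ρ)*G + e m) n with hGs
  have hGsS : ∀ n, Gs (n+1) = (1-ρ)*Gs n + e n := fun n => rfl
  have hGs0 : Gs 0 = 0 := rfl
  have hGsnn : ∀ n, 0 ≤ Gs n := by
    intro n; induction n with
    | zero => simp [hGs0]
    | succ n ih => rw [hGsS]; have := he0 n; positivity
  have hβ : ∀ n, s n ≤ (1-ρ)^n * s 0 + 2*C*Gs n := by
    intro n; induction n with
    | zero => simp [hGs0]
    | succ n ih =>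
      have := h2 n
      have h' : (1-ρ) * s n ≤ (1-ρ) * ((1-ρ)^n * s 0 + 2*C*Gs n) :=
        mul_le_mul_of_nonneg_left ih hρ1'
      rw [hGsS]; rw [pow_succ]
      nlinarith [he0 n, hGsnn n, mul_nonneg hC (hGsnn n)]
  have hGsum : ∀ n, ρ * ∑ i ∈ range n, Gs i = (∑ i ∈ range n, e i) - Gs n := by
    intro n; induction n with
    | zero => simp [hGs0]
    | succ n ih =>
      rw [sum_range_succ, sum_range_succ, mul_add, ih, hGsS]; ring
  have hgeo : ∀ m, ρ * ∑ i ∈ range m, (1-ρ)^i = 1 - (1-ρ)^m := by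
    intro m; induction m with
    | zero => simp
    | succ m ih => rw [sum_range_succ, mul_add, ih, pow_succ]; ring
  have hmain : ∀ n, a n + (2*γ - 2*A*γ^2) * ∑ i ∈ range n, e i
      ≤ a 0 + γ^2*B*∑ i ∈ range n, ((1-ρ)^i * s 0 + 2*C*Gs i) := by
    intro n; induction n with
    | zero => simp
    | succ n ih =>
      have hb := hβ n
      have h1' := h1 n
      have h3' := h3 n
      have hγG : γ^2 * G n ≤ γ^2 * (2*A*e n + B*s n) :=
        mul_le_mul_of_nonneg_left h3' (by positivity)
      have hBs : γ^2*B*s n ≤ γ^2*B*((1-ρ)^n * s 0 + 2*C*Gs n) :=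
        mul_le_mul_of_nonneg_left hb (by positivity)
      rw [sum_range_succ, sum_range_succ]
      nlinarith
  have hkey : ∀ n, a n + γ * ∑ i ∈ range n, e i
      ≤ a 0 + γ^2*B/ρ * ((1 - (1-ρ)^n) * s 0) := by
    intro n
    set E := ∑ i ∈ range n, e i with hE_def
    set S := ∑ i ∈ range n, ((1-ρ)^i * s 0 + 2*C*Gs i) with hS_def
    set q := (1-ρ)^n with hq_def
    have hm := hmain n
    have hS : ρ * S = (1 - q) * s 0 + 2*C*(E - Gs n) := by
      rw [hS_def, sum_add_distrib, mul_add]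
      congr 1
      · rw [← sum_mul, ← mul_assoc, hgeo n]
      · calc ρ * ∑ i ∈ range n, (2*C*Gs i) = 2*C*(ρ * ∑ i ∈ range n, Gs i) := by
              rw [← mul_sum]; ring
          _ = 2*C*(E - Gs n) := by rw [hGsum n]
    have hE : 0 ≤ E := sum_nonneg fun i _ => he0 i
    have hGn : 0 ≤ Gs n := hGsnn n
    have hcoef : (γ*ρ + 2*C*γ^2*B) * E ≤ ((2*γ - 2*A*γ^2)*ρ) * E := by
      apply mul_le_mul_of_nonneg_right _ hE
      nlinarith [mul_le_mul_of_nonneg_left hstep hγ.le]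
    refine le_of_mul_le_mul_right ?_ hρ
    have hm' := mul_le_mul_of_nonneg_right hm hρ.le
    have hS' : γ^2*B*S*ρ = γ^2*B*((1-q)*s 0) + 2*C*γ^2*B*E - 2*C*γ^2*B*Gs n := by
      rw [show γ^2*B*S*ρ = γ^2*B*(ρ*S) from by ring, hS]; ring
    have hrhs : (a 0 + γ^2*B/ρ * ((1-q) * s 0))*ρ
        = a 0 * ρ + γ^2*B*((1-q)*s 0) := by
      field_simp
    have hGnn : 0 ≤ 2*C*γ^2*B*Gs n := by positivity
    nlinarith [hm', hS', hrhs, hcoef, hGnn]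
  have hbnd : ∀ n, γ * ∑ j ∈ range k, e j
      ≤ a 0 + γ^2*B/ρ * s 0 - γ^2*B/ρ * ((1-ρ)^(k+n) * s 0) := by
    intro n
    have h4 := hkey (k+n)
    have h5 : γ * ∑ j ∈ range k, e j ≤ γ * ∑ j ∈ range (k+n), e j := by
      apply mul_le_mul_of_nonneg_left _ hγ.le
      exact sum_le_sum_of_subset_of_nonneg (range_subset_range.2 (Nat.le_add_right k n))
        (fun i _ _ => he0 i)
    have h6 := ha0 (k+n)
    have h7 : γ^2*B/ρ * ((1 - (1-ρ)^(k+n)) * s 0)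
        = γ^2*B/ρ * s 0 - γ^2*B/ρ * ((1-ρ)^(k+n) * s 0) := by ring
    linarith
  have hlim : Tendsto (fun n : ℕ => a 0 + γ^2*B/ρ * s 0 - γ^2*B/ρ * ((1-ρ)^(k+n) * s 0))
      atTop (nhds (a 0 + γ^2*B/ρ * s 0)) := by
    have h0 : Tendsto (fun n : ℕ => (1-ρ)^n) atTop (nhds 0) :=
      tendsto_pow_atTop_nhds_zero_of_lt_one hρ1' hρ1''
    have h1' : Tendsto (fun n : ℕ => (1-ρ)^(k+n)) atTop (nhds 0) := by
      have := h0.comp (tendsto_add_atTop_nat k)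
      simpa [Function.comp_def, add_comm] using this
    have h2' : Tendsto (fun n : ℕ => γ^2*B/ρ * ((1-ρ)^(k+n) * s 0)) atTop (nhds 0) := by
      have := (h1'.mul_const (s 0)).const_mul (γ^2*B/ρ)
      simpa [mul_assoc] using this
    have := tendsto_const_nhds (x := a 0 + γ^2*B/ρ * s 0) (f := atTop (α := ℕ)) |>.sub h2'
    simpa using this
  exact ge_of_tendsto' hlim hbnd

end aux

set_option maxHeartbeats 2000000 in
/-- Proposition 1: smooth case `R ≡ 0`, variance reduced (`D₁ = D₂ = 0`),
constant step size `γ ≤ 1/(4(A+MC))` with `M = B/(2ρ)`; then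
`E[f(x̄_k) − f(x*)] ≤ (‖x₀−x*‖² + 2Mγ²σ₀²)/(γ k)`. -/
theorem stmt_11
    {d : ℕ} {Ω : Type*} {m0 : MeasurableSpace Ω} {μ : Measure Ω} [IsProbabilityMeasure μ]
    (ℱ : MeasureTheory.Filtration ℕ m0)
    (f : EuclideanSpace ℝ (Fin d) → ℝ)
    (f' : EuclideanSpace ℝ (Fin d) → EuclideanSpace ℝ (Fin d))
    (L A B C ρ : ℝ)
    (hL : 0 < L) (hA : 0 ≤ A) (hB : 0 ≤ B) (hC : 0 ≤ C)
    (hρ : 0 < ρ) (hρ1 : ρ ≤ 1)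
    (hsmooth : ∀ x y, f y ≤ f x + ⟪f' x, y - x⟫ + L / 2 * ‖y - x‖ ^ 2)
    (hconvf : ∀ x y, f x + ⟪f' x, y - x⟫ ≤ f y)
    (xstar : EuclideanSpace ℝ (Fin d))
    (hmin : ∀ y, f xstar ≤ f y)
    -- constant step size 0 < γ ≤ 1/(4(A+MC)) with M = B/(2ρ)
    (γ : ℝ) (hγpos : 0 < γ) (hγ : γ ≤ 1 / (4 * (A + B / (2 * ρ) * C)))
    (x g : ℕ → Ω → EuclideanSpace ℝ (Fin d)) (σ2 : ℕ → Ω → ℝ)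
    (x0 : EuclideanSpace ℝ (Fin d)) (σ0sq : ℝ)
    (hx0 : ∀ ω, x 0 ω = x0) (hσ0 : ∀ ω, σ2 0 ω = σ0sq)
    (hx_meas : ∀ k, StronglyMeasurable[ℱ k] (x k))
    (hσ_meas : ∀ k, StronglyMeasurable[ℱ k] (σ2 k))
    (hg_meas : ∀ k, StronglyMeasurable[ℱ (k + 1)] (g k))
    (hg_int : ∀ k, Integrable (fun ω => ‖g k ω‖ ^ 2) μ)
    (hσ_int : ∀ k, Integrable (σ2 k) μ)
    (hf_int : ∀ k, Integrable (fun ω => f (x k ω)) μ)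
    (hunbiased : ∀ k, μ[g k | ℱ k] =ᵐ[μ] fun ω => f' (x k ω))
    (hvar : ∀ k, μ[fun ω => ‖g k ω - f' xstar‖ ^ 2 | ℱ k]
      ≤ᵐ[μ] fun ω => 2 * A * (f (x k ω) - f xstar - ⟪f' xstar, x k ω - xstar⟫)
        + B * σ2 k ω)
    (hnoise : ∀ k, μ[σ2 (k + 1) | ℱ k]
      ≤ᵐ[μ] fun ω => (1 - ρ) * σ2 k ω
        + 2 * C * (f (x k ω) - f xstar - ⟪f' xstar, x k ω - xstar⟫))
    -- the iterates: x_{k+1} = x_k − γ g_k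
    (hiter : ∀ k ω, x (k + 1) ω = x k ω - γ • g k ω)
    (k : ℕ) (hk : 1 ≤ k) :
    ∫ ω, (f ((k : ℝ)⁻¹ • ∑ j ∈ range k, x j ω) - f xstar) ∂μ
    ≤ (‖x0 - xstar‖ ^ 2 + 2 * (B / (2 * ρ)) * γ ^ 2 * σ0sq) / (γ * k) := by
  classical
  have hle : ∀ j, ℱ j ≤ m0 := fun j => ℱ.le j
  -- gradient at the minimizer vanishes
  have hf'0 : f' xstar = 0 := by
    have h := hsmooth xstar (xstar - (1/L) • f' xstar)
    have h2 := hmin (xstar - (1/L) • f' xstar)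
    have e1 : (xstar - (1/L) • f' xstar) - xstar = -((1/L) • f' xstar) := by abel
    rw [e1, inner_neg_right, real_inner_smul_right, real_inner_self_eq_norm_sq,
      norm_neg, norm_smul, Real.norm_eq_abs, mul_pow, sq_abs] at h
    have hhalf : L/2 * ((1/L)^2 * ‖f' xstar‖^2) = (1/L)/2 * ‖f' xstar‖^2 := by
      field_simp
    have hpos : 0 < 1/L := by positivity
    have hn2 : ‖f' xstar‖^2 ≤ 0 := by nlinarith [h, h2, hhalf, hpos]
    have : ‖f' xstar‖ = 0 := by nlinarith [norm_nonneg (f' xstar), sq_nonneg ‖f' xstar‖]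
    exact norm_eq_zero.mp this
  -- coordinatewise bound
  have hcoord : ∀ (v : EuclideanSpace ℝ (Fin d)) (i : Fin d), (v i)^2 ≤ ‖v‖^2 := by
    intro v i
    rw [EuclideanSpace.norm_eq, Real.sq_sqrt (by positivity)]
    calc (v i)^2 = ‖v i‖^2 := by rw [Real.norm_eq_abs, sq_abs]
      _ ≤ ∑ j, ‖v j‖^2 := Finset.single_le_sum (f := fun j => ‖v j‖^2)
            (fun j _ => sq_nonneg _) (mem_univ i)
  -- basic measurability/integrability
  have hxm : ∀ j, StronglyMeasurable (x j) := fun j => (hx_meas j).mono (hle j)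
  have hgm : ∀ j, StronglyMeasurable (g j) := fun j => (hg_meas j).mono (hle (j+1))
  have hg_int1 : ∀ j, Integrable (g j) μ := by
    intro j
    refine Integrable.mono' ((integrable_const (1:ℝ)).add (hg_int j)) (hgm j).aestronglyMeasurable ?_
    filter_upwards with ω
    simp only [Pi.add_apply]
    have h1 : (0:ℝ) ≤ ‖g j ω‖ := norm_nonneg _
    nlinarith [sq_nonneg (‖g j ω‖ - 1)]
  have hx2_int : ∀ j, Integrable (fun ω => ‖x j ω - xstar‖^2) μ := by
    intro j; induction j with
    | zero =>
      have : (fun ω => ‖x 0 ω - xstar‖^2) = fun _ => ‖x0 - xstar‖^2 :=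
        funext fun ω => by rw [hx0]
      rw [this]; exact integrable_const _
    | succ j ih =>
      refine Integrable.mono' ((ih.const_mul 2).add ((hg_int j).const_mul (2*γ^2)))
        ((((hx_meas (j+1)).mono (hle _)).sub stronglyMeasurable_const).norm.pow 2).aestronglyMeasurable ?_
      filter_upwards with ω
      simp only [Pi.add_apply]
      rw [Real.norm_eq_abs, abs_of_nonneg (by positivity), hiter j ω,
        show x j ω - γ • g j ω - xstar = (x j ω - xstar) - γ • g j ω from by abel]
      have h1 := norm_sub_le (x j ω - xstar) (γ • g j ω)
      have h2 : ‖γ • g j ω‖ = |γ| * ‖g j ω‖ := by rw [norm_smul, Real.norm_eq_abs]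
      nlinarith [norm_nonneg (x j ω - xstar), norm_nonneg (γ • g j ω),
        norm_nonneg (x j ω - xstar - γ • g j ω), sq_abs γ,
        sq_nonneg (‖x j ω - xstar‖ - ‖γ • g j ω‖)]
  have hinner_g_int : ∀ j, Integrable (fun ω => ⟪x j ω - xstar, g j ω⟫) μ := by
    intro j
    refine Integrable.mono' (((hx2_int j).add (hg_int j)).const_mul (1/2))
      (((hxm j).sub stronglyMeasurable_const).inner (hgm j)).aestronglyMeasurable ?_
    filter_upwards with ω
    simp only [Pi.add_apply]
    have h1 := abs_real_inner_le_norm (x j ω - xstar) (g j ω)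
    rw [Real.norm_eq_abs]
    nlinarith [sq_nonneg (‖x j ω - xstar‖ - ‖g j ω‖), norm_nonneg (x j ω - xstar),
      norm_nonneg (g j ω)]
  have hf'x_int : ∀ j, Integrable (fun ω => f' (x j ω)) μ :=
    fun j => integrable_condExp.congr (hunbiased j)
  -- componentwise conditional expectation identity
  have hcomp : ∀ j (i : Fin d), μ[(fun ω => g j ω i)|ℱ j] =ᵐ[μ] fun ω => f' (x j ω) i := by
    intro j i
    have hu_int : Integrable (fun ω => g j ω i) μ := by
      simpa using (EuclideanSpace.proj (𝕜 := ℝ) i).integrable_comp (hg_int1 j)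
    have hv_int : Integrable (fun ω => f' (x j ω) i) μ := by
      simpa using (EuclideanSpace.proj (𝕜 := ℝ) i).integrable_comp (hf'x_int j)
    refine (ae_eq_condExp_of_forall_setIntegral_eq (hle j) hu_int
      (fun s _ _ => hv_int.integrableOn) ?_ ?_).symm
    · intro s hs _
      have hvec : ∫ ω in s, f' (x j ω) ∂μ = ∫ ω in s, g j ω ∂μ := by
        rw [← setIntegral_condExp (hle j) (hg_int1 j) hs]
        exact integral_congr_ae (ae_restrict_of_ae (hunbiased j).symm)
      have h1 := (EuclideanSpace.proj (𝕜 := ℝ) i).integral_comp_comm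
        ((hf'x_int j).integrableOn (s := s))
      have h2 := (EuclideanSpace.proj (𝕜 := ℝ) i).integral_comp_comm
        ((hg_int1 j).integrableOn (s := s))
      simp only [PiLp.proj_apply] at h1 h2
      rw [h1, hvec, ← h2]
    · have hw : StronglyMeasurable[ℱ j] fun ω => ((μ[g j|ℱ j]) ω) i :=
        Continuous.comp_stronglyMeasurable (EuclideanSpace.proj (𝕜 := ℝ) i).continuous
          stronglyMeasurable_condExp
      refine ⟨_, hw, ?_⟩
      filter_upwards [hunbiased j] with ω h
      rw [h]
  -- pull-out property, coordinatewise, and the resulting inner-product identity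
  have hinner_key : ∀ j, (∫ ω, ⟪x j ω - xstar, g j ω⟫ ∂μ
        = ∫ ω, ⟪x j ω - xstar, f' (x j ω)⟫ ∂μ)
      ∧ Integrable (fun ω => ⟪x j ω - xstar, f' (x j ω)⟫) μ := by
    intro j
    have key : ∀ i : Fin d,
        (∫ ω, (x j ω - xstar) i * g j ω i ∂μ = ∫ ω, (x j ω - xstar) i * f' (x j ω) i ∂μ)
        ∧ Integrable (fun ω => (x j ω - xstar) i * f' (x j ω) i) μ
        ∧ Integrable (fun ω => (x j ω - xstar) i * g j ω i) μ := by
      intro i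
      set hh : Ω → ℝ := fun ω => (x j ω - xstar) i with hhdef
      set uu : Ω → ℝ := fun ω => g j ω i with uudef
      set vv : Ω → ℝ := fun ω => f' (x j ω) i with vvdef
      have hh_sm : StronglyMeasurable[ℱ j] hh :=
        Continuous.comp_stronglyMeasurable (EuclideanSpace.proj (𝕜 := ℝ) i).continuous
          ((hx_meas j).sub stronglyMeasurable_const)
      have huu_sm : StronglyMeasurable uu :=
        Continuous.comp_stronglyMeasurable (EuclideanSpace.proj (𝕜 := ℝ) i).continuous (hgm j)
      have huu_int : Integrable uu μ := by
        simpa [uudef] using (EuclideanSpace.proj (𝕜 := ℝ) i).integrable_comp (hg_int1 j)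
      have hprod_int : Integrable (hh * uu) μ := by
        refine Integrable.mono' (((hx2_int j).add (hg_int j)).const_mul (1/2))
          ((hh_sm.mono (hle j)).mul huu_sm).aestronglyMeasurable ?_
        filter_upwards with ω
        simp only [Pi.add_apply]
        have h1 : (hh ω)^2 ≤ ‖x j ω - xstar‖^2 := hcoord (x j ω - xstar) i
        have h2 : (uu ω)^2 ≤ ‖g j ω‖^2 := hcoord (g j ω) i
        have h3 : |hh ω * uu ω| = |hh ω| * |uu ω| := abs_mul _ _
        rw [Real.norm_eq_abs, Pi.mul_apply, h3]
        nlinarith [sq_nonneg (|hh ω| - |uu ω|), sq_abs (hh ω), sq_abs (uu ω),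
          abs_nonneg (hh ω), abs_nonneg (uu ω)]
      have hpull := condExp_mul_of_stronglyMeasurable_left hh_sm hprod_int huu_int
      have haemul : hh * μ[uu|ℱ j] =ᵐ[μ] hh * vv := by
        filter_upwards [hcomp j i] with ω h
        simp only [Pi.mul_apply, uudef, vvdef, h]
      have i1 : ∫ ω, (hh * uu) ω ∂μ = ∫ ω, (μ[hh * uu|ℱ j]) ω ∂μ :=
        (integral_condExp (hle j)).symm
      have i2 : ∫ ω, (μ[hh * uu|ℱ j]) ω ∂μ = ∫ ω, (hh * μ[uu|ℱ j]) ω ∂μ :=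
        integral_congr_ae hpull
      have i3 : ∫ ω, (hh * μ[uu|ℱ j]) ω ∂μ = ∫ ω, (hh * vv) ω ∂μ :=
        integral_congr_ae haemul
      have hvv_int : Integrable (hh * vv) μ :=
        ((integrable_condExp.congr hpull).congr haemul)
      exact ⟨(i1.trans (i2.trans i3) : _), hvv_int, hprod_int⟩
    have hrep : ∀ (u w : EuclideanSpace ℝ (Fin d)), ⟪u, w⟫ = ∑ i, u i * w i := by
      intro u w
      simp [PiLp.inner_apply, RCLike.inner_apply, conj_trivial]
      exact Finset.sum_congr rfl fun _ _ => mul_comm _ _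
    constructor
    · have e1 : (fun ω => ⟪x j ω - xstar, g j ω⟫)
          = fun ω => ∑ i, (x j ω - xstar) i * g j ω i := funext fun ω => hrep _ _
      have e2 : (fun ω => ⟪x j ω - xstar, f' (x j ω)⟫)
          = fun ω => ∑ i, (x j ω - xstar) i * f' (x j ω) i := funext fun ω => hrep _ _
      rw [e1, e2, integral_finset_sum _ (fun i _ => (key i).2.2),
        integral_finset_sum _ (fun i _ => (key i).2.1)]
      exact Finset.sum_congr rfl fun i _ => (key i).1
    · have e2 : (fun ω => ⟪x j ω - xstar, f' (x j ω)⟫)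
          = fun ω => ∑ i, (x j ω - xstar) i * f' (x j ω) i := funext fun ω => hrep _ _
      rw [e2]
      exact integrable_finset_sum _ (fun i _ => (key i).2.1)
  -- the four sequences
  set aseq : ℕ → ℝ := fun j => ∫ ω, ‖x j ω - xstar‖^2 ∂μ with haseq
  set eseq : ℕ → ℝ := fun j => ∫ ω, (f (x j ω) - f xstar) ∂μ with heseq
  set sseq : ℕ → ℝ := fun j => ∫ ω, σ2 j ω ∂μ with hsseq
  set Gseq : ℕ → ℝ := fun j => ∫ ω, ‖g j ω‖^2 ∂μ with hGseq
  have hef_int : ∀ j, Integrable (fun ω => f (x j ω) - f xstar) μ :=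
    fun j => (hf_int j).sub (integrable_const _)
  have ha0 : ∀ n, 0 ≤ aseq n := fun n => integral_nonneg fun ω => by positivity
  have he0 : ∀ n, 0 ≤ eseq n := fun n => integral_nonneg fun ω => sub_nonneg.2 (hmin _)
  -- step inequality (1)
  have h1seq : ∀ j, aseq (j+1) ≤ aseq j - 2*γ*eseq j + γ^2 * Gseq j := by
    intro j
    have hfe : (fun ω => ‖x (j+1) ω - xstar‖^2)
        = fun ω => ‖x j ω - xstar‖^2 - 2*γ*⟪x j ω - xstar, g j ω⟫ + γ^2*‖g j ω‖^2 := by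
      funext ω
      rw [hiter j ω, show x j ω - γ • g j ω - xstar = (x j ω - xstar) - γ • g j ω from by abel,
        norm_sub_sq_real, real_inner_smul_right, norm_smul, Real.norm_eq_abs, mul_pow, sq_abs]
      ring
    have hint1 : Integrable (fun ω => ‖x j ω - xstar‖^2 - 2*γ*⟪x j ω - xstar, g j ω⟫) μ :=
      (hx2_int j).sub ((hinner_g_int j).const_mul (2*γ))
    have hEa : aseq (j+1) = aseq j - 2*γ*(∫ ω, ⟪x j ω - xstar, g j ω⟫ ∂μ) + γ^2 * Gseq j := by
      show (∫ ω, ‖x (j+1) ω - xstar‖^2 ∂μ) = _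
      rw [hfe, integral_add hint1 ((hg_int j).const_mul (γ^2)),
        integral_sub (hx2_int j) ((hinner_g_int j).const_mul (2*γ)),
        integral_const_mul, integral_const_mul]
    have hmono : eseq j ≤ ∫ ω, ⟪x j ω - xstar, g j ω⟫ ∂μ := by
      rw [(hinner_key j).1]
      refine integral_mono_ae (hef_int j) (hinner_key j).2 (Filter.Eventually.of_forall fun ω => ?_)
      show f (x j ω) - f xstar ≤ ⟪x j ω - xstar, f' (x j ω)⟫
      have h := hconvf (x j ω) xstar
      rw [show xstar - x j ω = -(x j ω - xstar) from by abel, inner_neg_right] at h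
      have : ⟪f' (x j ω), x j ω - xstar⟫ = ⟪x j ω - xstar, f' (x j ω)⟫ := real_inner_comm _ _
      linarith
    have := mul_le_mul_of_nonneg_left hmono (by positivity : (0:ℝ) ≤ 2*γ)
    linarith [hEa]
  -- step inequality (3)
  have h3seq : ∀ j, Gseq j ≤ 2*A*eseq j + B*sseq j := by
    intro j
    have hv := hvar j
    simp only [hf'0, inner_zero_left, sub_zero] at hv
    have hRint : Integrable (fun ω => 2*A*(f (x j ω) - f xstar) + B*σ2 j ω) μ :=
      ((hef_int j).const_mul (2*A)).add ((hσ_int j).const_mul B)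
    have hGe : Gseq j = ∫ ω, (μ[fun ω => ‖g j ω‖^2|ℱ j]) ω ∂μ := (integral_condExp (hle j)).symm
    have h2 : ∫ ω, (μ[fun ω => ‖g j ω‖^2|ℱ j]) ω ∂μ
        ≤ ∫ ω, (2*A*(f (x j ω) - f xstar) + B*σ2 j ω) ∂μ :=
      integral_mono_ae integrable_condExp hRint hv
    have h3 : ∫ ω, (2*A*(f (x j ω) - f xstar) + B*σ2 j ω) ∂μ = 2*A*eseq j + B*sseq j := by
      rw [integral_add ((hef_int j).const_mul (2*A)) ((hσ_int j).const_mul B),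
        integral_const_mul, integral_const_mul]
    linarith [hGe, h2, h3]
  -- step inequality (2)
  have h2seq : ∀ j, sseq (j+1) ≤ (1-ρ)*sseq j + 2*C*eseq j := by
    intro j
    have hv := hnoise j
    simp only [hf'0, inner_zero_left, sub_zero] at hv
    have hRint : Integrable (fun ω => (1-ρ)*σ2 j ω + 2*C*(f (x j ω) - f xstar)) μ :=
      ((hσ_int j).const_mul (1-ρ)).add ((hef_int j).const_mul (2*C))
    have hGe : sseq (j+1) = ∫ ω, (μ[σ2 (j+1)|ℱ j]) ω ∂μ := (integral_condExp (hle j)).symm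
    have h2 : ∫ ω, (μ[σ2 (j+1)|ℱ j]) ω ∂μ
        ≤ ∫ ω, ((1-ρ)*σ2 j ω + 2*C*(f (x j ω) - f xstar)) ∂μ :=
      integral_mono_ae integrable_condExp hRint hv
    have h3 : ∫ ω, ((1-ρ)*σ2 j ω + 2*C*(f (x j ω) - f xstar)) ∂μ
        = (1-ρ)*sseq j + 2*C*eseq j := by
      rw [integral_add ((hσ_int j).const_mul (1-ρ)) ((hef_int j).const_mul (2*C)),
        integral_const_mul, integral_const_mul]
    linarith [hGe, h2, h3]
  -- step-size condition
  have hstep : 2*γ*(A*ρ + B*C) ≤ ρ := by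
    have hM : 0 ≤ B/(2*ρ)*C := by positivity
    have hBC : B*C = (B/(2*ρ)*C)*(2*ρ) := by field_simp
    rcases eq_or_lt_of_le (by positivity : (0:ℝ) ≤ A + B/(2*ρ)*C) with hQ | hQ
    · have hA0 : A = 0 := by linarith [hM]
      have hMC0 : B/(2*ρ)*C = 0 := by linarith
      rw [hA0, hBC, hMC0]
      simp; positivity
    · have hγ' : γ * (4*(A + B/(2*ρ)*C)) ≤ 1 := by
        rw [← le_div_iff₀ (by positivity)]
        exact hγ.trans_eq (by ring_nf)
      nlinarith [mul_le_mul_of_nonneg_left hγ' hρ.le,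
        mul_nonneg (mul_nonneg hγpos.le hρ.le) hA]
  -- apply the sequence lemma
  have hfinal := stmt11_seq γ A B C ρ hγpos hB hC hρ hρ1 hstep aseq eseq sseq Gseq
    ha0 he0 h1seq h2seq h3seq k
  have ha0v : aseq 0 = ‖x0 - xstar‖^2 := by
    show (∫ ω, ‖x 0 ω - xstar‖^2 ∂μ) = _
    have : (fun ω => ‖x 0 ω - xstar‖^2) = fun _ => ‖x0 - xstar‖^2 :=
      funext fun ω => by rw [hx0]
    rw [this, integral_const]; simp
  have hs0v : sseq 0 = σ0sq := by
    show (∫ ω, σ2 0 ω ∂μ) = _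
    have : (fun ω => σ2 0 ω) = fun _ => σ0sq := funext fun ω => hσ0 ω
    rw [this, integral_const]; simp
  -- Jensen step (finite convexity)
  have hkpos : (0:ℝ) < (k:ℝ) := by exact_mod_cast Nat.lt_of_lt_of_le Nat.zero_lt_one hk
  have hjensen : ∀ ω, f ((k:ℝ)⁻¹ • ∑ j ∈ range k, x j ω) - f xstar
      ≤ (k:ℝ)⁻¹ * ∑ j ∈ range k, (f (x j ω) - f xstar) := by
    intro ω
    set z := (k:ℝ)⁻¹ • ∑ j ∈ range k, x j ω with hz
    have hsum0 : ∑ j ∈ range k, (x j ω - z) = 0 := by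
      rw [sum_sub_distrib, sum_const, card_range, ← Nat.cast_smul_eq_nsmul ℝ, hz,
        smul_smul, mul_inv_cancel₀ (ne_of_gt hkpos), one_smul, sub_self]
    have hs := Finset.sum_le_sum (fun j (_ : j ∈ range k) => hconvf z (x j ω))
    rw [sum_add_distrib, sum_const, card_range, ← inner_sum, hsum0, inner_zero_right,
      add_zero, nsmul_eq_mul] at hs
    have h2 : (k:ℝ) * (f z - f xstar) ≤ ∑ j ∈ range k, (f (x j ω) - f xstar) := by
      rw [sum_sub_distrib, sum_const, card_range, nsmul_eq_mul]
      linarith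
    calc f z - f xstar = (k:ℝ)⁻¹ * ((k:ℝ) * (f z - f xstar)) := by
          field_simp
      _ ≤ (k:ℝ)⁻¹ * ∑ j ∈ range k, (f (x j ω) - f xstar) := by
          apply mul_le_mul_of_nonneg_left h2 (by positivity)
  have hrhs_int : Integrable (fun ω => (k:ℝ)⁻¹ * ∑ j ∈ range k, (f (x j ω) - f xstar)) μ :=
    (integrable_finset_sum _ (fun j _ => hef_int j)).const_mul _
  have hlhs : ∫ ω, (f ((k:ℝ)⁻¹ • ∑ j ∈ range k, x j ω) - f xstar) ∂μ
      ≤ ∫ ω, ((k:ℝ)⁻¹ * ∑ j ∈ range k, (f (x j ω) - f xstar)) ∂μ :=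
    integral_mono_of_nonneg (Filter.Eventually.of_forall fun ω => sub_nonneg.2 (hmin _))
      hrhs_int (Filter.Eventually.of_forall hjensen)
  have hrhs_eq : ∫ ω, ((k:ℝ)⁻¹ * ∑ j ∈ range k, (f (x j ω) - f xstar)) ∂μ
      = (k:ℝ)⁻¹ * ∑ j ∈ range k, eseq j := by
    rw [integral_const_mul, integral_finset_sum _ (fun j _ => hef_int j)]
  -- finish
  have hnum : ‖x0 - xstar‖^2 + 2*(B/(2*ρ))*γ^2*σ0sq = aseq 0 + γ^2*B/ρ * sseq 0 := by
    rw [ha0v, hs0v]; field_simp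
  rw [hrhs_eq] at hlhs
  refine hlhs.trans ?_
  rw [hnum, div_eq_mul_inv, mul_inv, ← mul_assoc]
  have h2 : γ * (∑ j ∈ range k, eseq j) * (γ⁻¹ * (k:ℝ)⁻¹)
      = (k:ℝ)⁻¹ * ∑ j ∈ range k, eseq j := by
    field_simp
  have h3 := mul_le_mul_of_nonneg_right hfinal (by positivity : (0:ℝ) ≤ γ⁻¹ * (k:ℝ)⁻¹)
  linarith [h3, h2]
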